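/- arXiv:1509.04669 — 2 statements merged into one kernel-verified Lean document; each statement's English description precedes it below -/
import Mathlib

section
/- Let Γ act on a metric space (X,d) so that every generator s ∈ S of Γ acts as a bi-Lipschitz map with constant L ≥ 1. Define D_Γ(x,x') = inf over γ ∈ Γ of (|γ| + d(γx, x')). Then for all x, x' ∈ X: d_Γ(x,x') ≤ D_Γ(x,x') ≤ L^{d_Γ(x,x')} · d_Γ(x,x'), where d_Γ is the warped metric. In particular D_Γ = d_Γ when the action is isometric. -/
open scoped BigOperators

noncomputable def wordLength {G : Type*} [Group G] (S : Set G) (g : G) : ℕ :=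
  sInf {n : ℕ | ∃ f : Fin n → G, (∀ i, f i ∈ S ∨ (f i)⁻¹ ∈ S) ∧ (List.ofFn f).prod = g}

def chainSums {G : Type*} [Group G] {X : Type*} (S : Set G) (act : G → X → X)
    (d : X → X → ℝ) (x x' : X) : Set ℝ :=
  {c | ∃ (N : ℕ) (xs : Fin (N + 1) → X) (γs : Fin N → G),
    xs 0 = x ∧ xs (Fin.last N) = x' ∧
    c = ∑ i : Fin N, ((wordLength S (γs i) : ℝ) + d (act (γs i) (xs i.castSucc)) (xs i.succ))}

noncomputable def warpDist {G : Type*} [Group G] {X : Type*} (S : Set G) (act : G → X → X)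
    (d : X → X → ℝ) (x x' : X) : ℝ :=
  sInf (chainSums S act d x x')

/-- `D_Γ(x,x') = inf_γ (|γ| + d(γx,x'))`. -/
noncomputable def DGamma {G : Type*} [Group G] {X : Type*} (S : Set G) (act : G → X → X)
    (d : X → X → ℝ) (x x' : X) : ℝ :=
  sInf {c : ℝ | ∃ γ : G, c = (wordLength S γ : ℝ) + d (act γ x) x'}

section Aux

variable {G : Type*} [Group G] {X : Type*} [MetricSpace X]

/-- every element of the closure has a word representation -/
lemma exists_word (S : Set G) (hSgen : Subgroup.closure S = ⊤) (g : G) :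
    ∃ l : List G, (∀ a ∈ l, a ∈ S ∨ a⁻¹ ∈ S) ∧ l.prod = g := by
  have hg : g ∈ Subgroup.closure S := by rw [hSgen]; trivial
  induction hg using Subgroup.closure_induction with
  | mem s hs => exact ⟨[s], by simpa using Or.inl hs, by simp⟩
  | one => exact ⟨[], by simp, by simp⟩
  | mul a b _ _ ha hb =>
    obtain ⟨la, h1, h2⟩ := ha
    obtain ⟨lb, h3, h4⟩ := hb
    exact ⟨la ++ lb, by
      intro c hc
      rcases List.mem_append.1 hc with h | h
      · exact h1 c h
      · exact h3 c h, by rw [List.prod_append, h2, h4]⟩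
  | inv a _ ha =>
    obtain ⟨l, h1, h2⟩ := ha
    refine ⟨(l.map fun x => x⁻¹).reverse, ?_, by rw [← List.prod_inv_reverse, h2]⟩
    intro c hc
    rw [List.mem_reverse, List.mem_map] at hc
    obtain ⟨b, hb, rfl⟩ := hc
    rcases h1 b hb with h | h
    · exact Or.inr (by simpa using h)
    · exact Or.inl h

lemma wordLength_le_of_list (S : Set G) {g : G} (l : List G)
    (h1 : ∀ a ∈ l, a ∈ S ∨ a⁻¹ ∈ S) (h2 : l.prod = g) :
    wordLength S g ≤ l.length :=
  Nat.sInf_le ⟨l.get, fun i => h1 _ (l.get_mem i), by rw [List.ofFn_get]; exact h2⟩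

lemma exists_min_word (S : Set G) (hSgen : Subgroup.closure S = ⊤) (g : G) :
    ∃ l : List G, (∀ a ∈ l, a ∈ S ∨ a⁻¹ ∈ S) ∧ l.prod = g ∧ l.length = wordLength S g := by
  have hne : {n : ℕ | ∃ f : Fin n → G,
      (∀ i, f i ∈ S ∨ (f i)⁻¹ ∈ S) ∧ (List.ofFn f).prod = g}.Nonempty := by
    obtain ⟨l, h1, h2⟩ := exists_word S hSgen g
    exact ⟨l.length, l.get, fun i => h1 _ (l.get_mem i), by rw [List.ofFn_get]; exact h2⟩
  obtain ⟨f, hf, hprod⟩ := Nat.sInf_mem hne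
  refine ⟨List.ofFn f, ?_, hprod, List.length_ofFn⟩
  intro a ha
  obtain ⟨i, rfl⟩ := List.mem_ofFn.1 ha
  exact hf i

lemma wordLength_mul_le (S : Set G) (hSgen : Subgroup.closure S = ⊤) (a b : G) :
    wordLength S (a * b) ≤ wordLength S a + wordLength S b := by
  obtain ⟨la, h1, h2, h3⟩ := exists_min_word S hSgen a
  obtain ⟨lb, h4, h5, h6⟩ := exists_min_word S hSgen b
  have := wordLength_le_of_list S (la ++ lb) (by
    intro c hc
    rcases List.mem_append.1 hc with h | h
    · exact h1 c h
    · exact h4 c h) (by rw [List.prod_append, h2, h5])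
  simpa [h3, h6] using this

lemma dist_act_list_le (S : Set G) (act : G → X → X)
    (hact1 : ∀ x, act 1 x = x) (hactmul : ∀ g h x, act (g * h) x = act g (act h x))
    {L : ℝ} (hL : 1 ≤ L)
    (hbilip : ∀ s ∈ S, ∀ x y : X,
      dist x y ≤ L * dist (act s x) (act s y) ∧ dist (act s x) (act s y) ≤ L * dist x y)
    (l : List G) (hl : ∀ a ∈ l, a ∈ S ∨ a⁻¹ ∈ S) (a b : X) :
    dist (act l.prod a) (act l.prod b) ≤ L ^ l.length * dist a b := by
  have hL0 : (0:ℝ) ≤ L := le_trans zero_le_one hL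
  induction l with
  | nil => simp [hact1]
  | cons s t ih =>
    have key : ∀ u v : X, dist (act s u) (act s v) ≤ L * dist u v := by
      intro u v
      rcases hl s List.mem_cons_self with h | h
      · exact (hbilip s h u v).2
      · have h2 := (hbilip s⁻¹ h (act s u) (act s v)).1
        have e1 : act s⁻¹ (act s u) = u := by rw [← hactmul, inv_mul_cancel, hact1]
        have e2 : act s⁻¹ (act s v) = v := by rw [← hactmul, inv_mul_cancel, hact1]
        rwa [e1, e2] at h2
    have ih' := ih (fun a ha => hl a (List.mem_cons_of_mem s ha))
    rw [List.prod_cons, hactmul, hactmul]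
    calc dist (act s (act t.prod a)) (act s (act t.prod b))
        ≤ L * dist (act t.prod a) (act t.prod b) := key _ _
      _ ≤ L * (L ^ t.length * dist a b) := by
          exact mul_le_mul_of_nonneg_left ih' hL0
      _ = L ^ (s :: t).length * dist a b := by
          rw [List.length_cons, pow_succ]; ring

lemma dist_act_le (S : Set G) (hSgen : Subgroup.closure S = ⊤) (act : G → X → X)
    (hact1 : ∀ x, act 1 x = x) (hactmul : ∀ g h x, act (g * h) x = act g (act h x))
    {L : ℝ} (hL : 1 ≤ L)
    (hbilip : ∀ s ∈ S, ∀ x y : X,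
      dist x y ≤ L * dist (act s x) (act s y) ∧ dist (act s x) (act s y) ≤ L * dist x y)
    (g : G) (a b : X) :
    dist (act g a) (act g b) ≤ L ^ (wordLength S g) * dist a b := by
  obtain ⟨l, h1, h2, h3⟩ := exists_min_word S hSgen g
  rw [← h3, ← h2]
  exact dist_act_list_le S act hact1 hactmul hL hbilip l h1 a b

lemma wordLength_one (S : Set G) : wordLength S (1 : G) = 0 :=
  Nat.le_zero.1 (wordLength_le_of_list S [] (by simp) (by simp))

/-- main chain bound -/
lemma chain_bound (S : Set G) (hSgen : Subgroup.closure S = ⊤) (act : G → X → X)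
    (hact1 : ∀ x, act 1 x = x) (hactmul : ∀ g h x, act (g * h) x = act g (act h x))
    {L : ℝ} (hL : 1 ≤ L)
    (hbilip : ∀ s ∈ S, ∀ x y : X,
      dist x y ≤ L * dist (act s x) (act s y) ∧ dist (act s x) (act s y) ≤ L * dist x y) :
    ∀ (N : ℕ) (xs : Fin (N+1) → X) (γs : Fin N → G),
      ∃ g : G, ((wordLength S g : ℝ) ≤ ∑ i, (wordLength S (γs i) : ℝ)) ∧
        dist (act g (xs 0)) (xs (Fin.last N)) ≤
          L ^ (∑ i, (wordLength S (γs i) : ℝ)) *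
            ∑ i, dist (act (γs i) (xs i.castSucc)) (xs i.succ) := by
  have hL0 : (0:ℝ) < L := lt_of_lt_of_le zero_lt_one hL
  intro N
  induction N with
  | zero =>
    intro xs γs
    refine ⟨1, by simp [wordLength_one], ?_⟩
    have : Fin.last 0 = (0 : Fin 1) := rfl
    simp [hact1, this]
  | succ N ih =>
    intro xs γs
    obtain ⟨g, hg1, hg2⟩ := ih (fun i => xs i.castSucc) (fun i => γs i.castSucc)
    set γ := γs (Fin.last N) with hγ
    refine ⟨γ * g, ?_, ?_⟩
    · have h1 : (wordLength S (γ * g) : ℝ) ≤ (wordLength S γ : ℝ) + (wordLength S g : ℝ) := by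
        exact_mod_cast wordLength_mul_le S hSgen γ g
      rw [Fin.sum_univ_castSucc]
      have := add_le_add_left hg1 ((wordLength S γ : ℝ))
      linarith
    · set T : ℝ := ∑ i : Fin N, (wordLength S (γs i.castSucc) : ℝ) with hT
      set E : ℝ := ∑ i : Fin N,
        dist (act (γs i.castSucc) (xs i.castSucc.castSucc)) (xs i.castSucc.succ) with hE
      have hT0 : 0 ≤ T := Finset.sum_nonneg fun i _ => Nat.cast_nonneg _
      have hE0 : 0 ≤ E := Finset.sum_nonneg fun i _ => dist_nonneg
      have hg2' : dist (act g (xs 0)) (xs (Fin.last N).castSucc) ≤ L ^ T * E := by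
        have : (fun i : Fin N => (i.castSucc : Fin (N+1)).succ)
            = fun i : Fin N => (i.succ : Fin (N+1)).castSucc := by
          funext i; exact (Fin.succ_castSucc i).symm
        simpa [hT, hE] using hg2
      have key : dist (act γ (act g (xs 0))) (act γ (xs (Fin.last N).castSucc))
          ≤ L ^ (wordLength S γ) * (L ^ T * E) := by
        calc dist (act γ (act g (xs 0))) (act γ (xs (Fin.last N).castSucc))
            ≤ L ^ (wordLength S γ) * dist (act g (xs 0)) (xs (Fin.last N).castSucc) :=
              dist_act_le S hSgen act hact1 hactmul hL hbilip γ _ _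
          _ ≤ L ^ (wordLength S γ) * (L ^ T * E) :=
              mul_le_mul_of_nonneg_left hg2' (pow_nonneg hL0.le _)
      have hpow : L ^ (wordLength S γ) * L ^ T = L ^ ((wordLength S γ : ℝ) + T) := by
        rw [Real.rpow_add hL0, Real.rpow_natCast]
      have htri : dist (act (γ * g) (xs 0)) (xs (Fin.last (N+1)))
          ≤ dist (act γ (act g (xs 0))) (act γ (xs (Fin.last N).castSucc))
            + dist (act γ (xs (Fin.last N).castSucc)) (xs (Fin.last (N+1))) := by
        rw [hactmul]
        exact dist_triangle _ _ _
      set dN : ℝ := dist (act γ (xs (Fin.last N).castSucc)) (xs (Fin.last (N+1))) with hdN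
      have hdN0 : 0 ≤ dN := dist_nonneg
      -- total sums
      have hTsum : (∑ i : Fin (N+1), (wordLength S (γs i) : ℝ)) = T + (wordLength S γ : ℝ) := by
        rw [Fin.sum_univ_castSucc]
      have hEsum : (∑ i : Fin (N+1), dist (act (γs i) (xs i.castSucc)) (xs i.succ))
          = E + dN := by
        rw [Fin.sum_univ_castSucc, Fin.succ_last]
      rw [hTsum, hEsum]
      have h1le : (1:ℝ) ≤ L ^ (T + (wordLength S γ : ℝ)) :=
        Real.one_le_rpow hL (by positivity)
      have hmono : L ^ ((wordLength S γ : ℝ) + T) = L ^ (T + (wordLength S γ : ℝ)) := by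
        ring_nf
      calc dist (act (γ * g) (xs 0)) (xs (Fin.last (N+1)))
          ≤ L ^ (wordLength S γ) * (L ^ T * E) + dN := by
            have := le_trans htri (add_le_add key (le_refl dN))
            simpa using this
        _ = L ^ ((wordLength S γ : ℝ) + T) * E + dN := by rw [← mul_assoc, hpow]
        _ ≤ L ^ (T + (wordLength S γ : ℝ)) * E + L ^ (T + (wordLength S γ : ℝ)) * dN := by
            rw [hmono]
            have := mul_le_mul_of_nonneg_right h1le hdN0
            nlinarith
        _ = L ^ (T + (wordLength S γ : ℝ)) * (E + dN) := by ring

end Aux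

/-- `d_Γ(x,x') ≤ D_Γ(x,x') ≤ L^{d_Γ(x,x')} · d_Γ(x,x')`. -/
theorem warped_metric_vs_one_step {X : Type*} [MetricSpace X] {G : Type*} [Group G]
    (S : Set G) (hSfin : S.Finite) (hSgen : Subgroup.closure S = ⊤)
    (act : G → X → X)
    (hact1 : ∀ x, act 1 x = x) (hactmul : ∀ g h x, act (g * h) x = act g (act h x))
    (L : ℝ) (hL : 1 ≤ L)
    (hbilip : ∀ s ∈ S, ∀ x y : X,
      dist x y ≤ L * dist (act s x) (act s y) ∧ dist (act s x) (act s y) ≤ L * dist x y) :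
    ∀ x x' : X,
      warpDist S act dist x x' ≤ DGamma S act dist x x' ∧
      DGamma S act dist x x' ≤ L ^ (warpDist S act dist x x') * warpDist S act dist x x' := by
  have hL0 : (0:ℝ) < L := lt_of_lt_of_le zero_lt_one hL
  intro x x'
  set A := chainSums S act dist x x' with hA
  set B := {c : ℝ | ∃ γ : G, c = (wordLength S γ : ℝ) + dist (act γ x) x'} with hB
  have hBsubA : B ⊆ A := by
    rintro c ⟨γ, rfl⟩
    refine ⟨1, ![x, x'], ![γ], rfl, rfl, ?_⟩
    simp
  have hBne : B.Nonempty := ⟨_, 1, rfl⟩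
  have hAne : A.Nonempty := ⟨_, hBsubA hBne.choose_spec⟩
  have hAnonneg : ∀ c ∈ A, 0 ≤ c := by
    rintro c ⟨N, xs, γs, _, _, rfl⟩
    exact Finset.sum_nonneg fun i _ => add_nonneg (Nat.cast_nonneg _) dist_nonneg
  have hAbdd : BddBelow A := ⟨0, fun c hc => hAnonneg c hc⟩
  have hBbdd : BddBelow B := ⟨0, by rintro c ⟨γ, rfl⟩; positivity⟩
  constructor
  · exact csInf_le_csInf hAbdd hBne hBsubA
  · -- second part
    have step : ∀ c ∈ A, DGamma S act dist x x' ≤ L ^ c * c := by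
      rintro c ⟨N, xs, γs, h0, hlast, rfl⟩
      obtain ⟨g, hg1, hg2⟩ := chain_bound S hSgen act hact1 hactmul hL hbilip N xs γs
      set T : ℝ := ∑ i : Fin N, (wordLength S (γs i) : ℝ) with hT
      set E : ℝ := ∑ i : Fin N, dist (act (γs i) (xs i.castSucc)) (xs i.succ) with hE
      have hT0 : 0 ≤ T := Finset.sum_nonneg fun i _ => Nat.cast_nonneg _
      have hE0 : 0 ≤ E := Finset.sum_nonneg fun i _ => dist_nonneg
      have hc : (∑ i : Fin N, ((wordLength S (γs i) : ℝ)
          + dist (act (γs i) (xs i.castSucc)) (xs i.succ))) = T + E := by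
        rw [hT, hE, Finset.sum_add_distrib]
      rw [hc]
      have hD : DGamma S act dist x x' ≤ (wordLength S g : ℝ) + dist (act g x) x' :=
        csInf_le hBbdd ⟨g, rfl⟩
      have h1le : (1:ℝ) ≤ L ^ (T + E) := Real.one_le_rpow hL (by positivity)
      have hTle : L ^ T ≤ L ^ (T + E) :=
        Real.rpow_le_rpow_of_exponent_le hL (by linarith)
      have hgle : (wordLength S g : ℝ) + dist (act g (xs 0)) (xs (Fin.last N))
          ≤ T + L ^ T * E := add_le_add hg1 hg2
      have : T + L ^ T * E ≤ L ^ (T + E) * (T + E) := by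
        have h1 : T ≤ L ^ (T + E) * T := le_mul_of_one_le_left hT0 h1le
        have h2 : L ^ T * E ≤ L ^ (T + E) * E := mul_le_mul_of_nonneg_right hTle hE0
        nlinarith
      calc DGamma S act dist x x' ≤ (wordLength S g : ℝ) + dist (act g (xs 0)) (xs (Fin.last N)) := by
            rw [h0, hlast]; exact hD
        _ ≤ T + L ^ T * E := hgle
        _ ≤ L ^ (T + E) * (T + E) := this
    set w := warpDist S act dist x x' with hw
    have hw0 : 0 ≤ w := le_csInf hAne hAnonneg
    have key : ∀ ε : ℝ, 0 < ε → DGamma S act dist x x' ≤ L ^ (w + ε) * (w + ε) := by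
      intro ε hε
      obtain ⟨c, hcA, hclt⟩ := Real.lt_sInf_add_pos hAne hε
      have hc0 : 0 ≤ c := hAnonneg c hcA
      have h1 : DGamma S act dist x x' ≤ L ^ c * c := step c hcA
      have h2 : L ^ c ≤ L ^ (w + ε) :=
        Real.rpow_le_rpow_of_exponent_le hL hclt.le
      have hcw : c ≤ w + ε := le_of_lt hclt
      have h3 : L ^ c * c ≤ L ^ (w + ε) * (w + ε) := by
        have hp : (0:ℝ) < L ^ (w + ε) := Real.rpow_pos_of_pos hL0 _
        have hp2 : (0:ℝ) ≤ L ^ c := (Real.rpow_pos_of_pos hL0 _).le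
        nlinarith
      linarith
    have htend : Filter.Tendsto (fun ε : ℝ => L ^ (w + ε) * (w + ε)) (nhdsWithin 0 (Set.Ioi 0))
        (nhds (L ^ w * w)) := by
      have hcont : ContinuousAt (fun t : ℝ => L ^ t * t) w :=
        (Real.continuousAt_const_rpow (ne_of_gt hL0)).mul continuousAt_id
      have hadd : Filter.Tendsto (fun ε : ℝ => w + ε) (nhdsWithin 0 (Set.Ioi 0)) (nhds w) := by
        have : Filter.Tendsto (fun ε : ℝ => w + ε) (nhds 0) (nhds (w + 0)) :=
          tendsto_const_nhds.add Filter.tendsto_id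
        simpa using this.mono_left nhdsWithin_le_nhds
      exact hcont.tendsto.comp hadd
    refine ge_of_tendsto htend ?_
    filter_upwards [self_mem_nhdsWithin] with ε hε
    exact key ε hε
end

section
/- If y and y' lie in different orbits of the Γ-action on a proper metric space Y (equivalently, δ_n(y,y') > 0 for all n), then the warped distance d_s(y,y') tends to infinity as s → ∞. -/
open scoped BigOperators

/-- `δ_n(y,y')`: the minimal cost `∑_{i=0}^n d(y_{2i}, y_{2i+1})` over sequences
`y₀ = y, …, y_{2n+1} = y'` with `y_{2i} = s·y_{2i-1}` for some `s ∈ S`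
(the sequence is encoded as `n+1` consecutive pairs `(y_{2i}, y_{2i+1})`). -/
noncomputable def deltaCost {G : Type*} [Group G] {Y : Type*} [MetricSpace Y]
    (S : Set G) (act : G → Y → Y) (n : ℕ) (y y' : Y) : ℝ :=
  sInf {c | ∃ ys : Fin (n + 1) → Y × Y,
    (ys 0).1 = y ∧ (ys (Fin.last n)).2 = y' ∧
    (∀ i : Fin n, ∃ s ∈ S, (ys i.succ).1 = act s ((ys i.castSucc).2)) ∧
    c = ∑ i : Fin (n + 1), dist (ys i).1 (ys i).2}



set_option linter.unusedSectionVars false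
set_option maxHeartbeats 1000000

section Aux

variable {Y : Type*} [MetricSpace Y] {G : Type*} [Group G]

/-- The set whose infimum is `deltaCost`. -/
def dSet (S : Set G) (act : G → Y → Y) (n : ℕ) (y y' : Y) : Set ℝ :=
  {c | ∃ ys : Fin (n + 1) → Y × Y,
    (ys 0).1 = y ∧ (ys (Fin.last n)).2 = y' ∧
    (∀ i : Fin n, ∃ s ∈ S, (ys i.succ).1 = act s ((ys i.castSucc).2)) ∧
    c = ∑ i : Fin (n + 1), dist (ys i).1 (ys i).2}

lemma deltaCost_eq (S : Set G) (act : G → Y → Y) (n : ℕ) (y y' : Y) :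
    deltaCost S act n y y' = sInf (dSet S act n y y') := rfl

lemma dSet_nonneg (S : Set G) (act : G → Y → Y) (n : ℕ) (y y' : Y) :
    ∀ c ∈ dSet S act n y y', 0 ≤ c := by
  rintro c ⟨ys, -, -, -, rfl⟩
  exact Finset.sum_nonneg fun i _ => dist_nonneg

lemma dSet_bddBelow (S : Set G) (act : G → Y → Y) (n : ℕ) (y y' : Y) :
    BddBelow (dSet S act n y y') :=
  ⟨0, fun c hc => dSet_nonneg S act n y y' c hc⟩

lemma dSet_nonempty (S : Set G) (hS1 : (1 : G) ∈ S) (act : G → Y → Y)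
    (hact1 : ∀ z, act 1 z = z) (n : ℕ) (z z' : Y) :
    (dSet S act n z z').Nonempty := by
  refine ⟨_, fun j => (z, if j = Fin.last n then z' else z), rfl, by simp, ?_, rfl⟩
  intro i
  refine ⟨1, hS1, ?_⟩
  simp [hact1, (Fin.castSucc_lt_last i).ne]

/-- Lemma A : moving the start point costs at most the distance. -/
lemma deltaCost_le_dist_add (S : Set G) (hS1 : (1 : G) ∈ S) (act : G → Y → Y)
    (hact1 : ∀ z, act 1 z = z) (n : ℕ) (x z y' : Y) :
    deltaCost S act n x y' ≤ dist x z + deltaCost S act n z y' := by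
  rw [deltaCost_eq, deltaCost_eq, ← sub_le_iff_le_add']
  refine le_csInf (dSet_nonempty S hS1 act hact1 n z y') ?_
  rintro c ⟨q, hq0, hqlast, hqgen, rfl⟩
  rw [sub_le_iff_le_add']
  set r : Fin (n + 1) → Y × Y := fun k => (if k = 0 then x else (q k).1, (q k).2) with hr
  have hmem : (∑ i : Fin (n + 1), dist (r i).1 (r i).2) ∈ dSet S act n x y' := by
    refine ⟨r, by simp [hr], by simpa [hr] using hqlast, ?_, rfl⟩
    intro i
    obtain ⟨s, hs, h⟩ := hqgen i
    exact ⟨s, hs, by simp [hr, Fin.succ_ne_zero, h]⟩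
  refine (csInf_le (dSet_bddBelow S act n x y') hmem).trans ?_
  rw [Fin.sum_univ_succ (f := fun i => dist (r i).1 (r i).2),
    Fin.sum_univ_succ (f := fun i => dist (q i).1 (q i).2)]
  have h1 : dist (r 0).1 (r 0).2 ≤ dist x z + dist (q 0).1 (q 0).2 := by
    simp only [hr, if_pos rfl]
    calc dist x (q 0).2 ≤ dist x (q 0).1 + dist (q 0).1 (q 0).2 := dist_triangle _ _ _
      _ = dist x z + dist (q 0).1 (q 0).2 := by rw [hq0]
  have h2 : ∀ i : Fin n, dist (r i.succ).1 (r i.succ).2 = dist (q i.succ).1 (q i.succ).2 := by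
    intro i; simp [hr, Fin.succ_ne_zero]
  rw [Finset.sum_congr rfl fun i _ => h2 i]
  linarith

/-- Lemma B : prepending one generator application. -/
lemma deltaCost_succ_le (S : Set G) {s : G} (hs : s ∈ S) (act : G → Y → Y)
    (hS1 : (1 : G) ∈ S) (hact1 : ∀ z, act 1 z = z) (n : ℕ) (x y' : Y) :
    deltaCost S act (n + 1) x y' ≤ deltaCost S act n (act s x) y' := by
  rw [deltaCost_eq, deltaCost_eq]
  refine le_csInf (dSet_nonempty S hS1 act hact1 n (act s x) y') ?_
  rintro c ⟨q, hq0, hqlast, hqgen, rfl⟩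
  set r : Fin (n + 2) → Y × Y := Fin.cases (x, x) q with hr
  have hmem : (∑ i : Fin (n + 2), dist (r i).1 (r i).2) ∈ dSet S act (n + 1) x y' := by
    refine ⟨r, by simp [hr], ?_, ?_, rfl⟩
    · rw [show Fin.last (n + 1) = (Fin.last n).succ from (Fin.succ_last n).symm]
      rw [hr]; simp only [Fin.cases_succ]; exact hqlast
    · intro i
      induction i using Fin.cases with
      | zero =>
          refine ⟨s, hs, ?_⟩
          have e1 : r (0 : Fin (n + 1)).succ = q 0 := Fin.cases_succ _
          have e2 : r (Fin.castSucc (0 : Fin (n + 1))) = (x, x) := by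
            rw [Fin.castSucc_zero]; exact Fin.cases_zero
          rw [e1, e2, hq0]
      | succ j =>
          obtain ⟨t, ht, h⟩ := hqgen j
          refine ⟨t, ht, ?_⟩
          rw [← Fin.succ_castSucc]
          simpa [hr] using h
  refine (csInf_le (dSet_bddBelow S act (n + 1) x y') hmem).trans ?_
  rw [Fin.sum_univ_succ (f := fun i => dist (r i).1 (r i).2)]
  simp [hr]

/-- Lemma C : prepending a word. -/
lemma deltaCost_list_le (S : Set G) (hS1 : (1 : G) ∈ S) (act : G → Y → Y)
    (hact1 : ∀ z, act 1 z = z) (hactmul : ∀ g h z, act (g * h) z = act g (act h z)) :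
    ∀ (l : List G), (∀ g ∈ l, g ∈ S) → ∀ (x y' : Y) (n : ℕ),
      deltaCost S act (l.length + n) x y' ≤ deltaCost S act n (act l.prod x) y' := by
  intro l
  induction l with
  | nil => intro _ x y' n; simp [hact1]
  | cons s l ih =>
      intro hmem x y' n
      have h1 : deltaCost S act (l.length + (n + 1)) x y' ≤
          deltaCost S act (n + 1) (act l.prod x) y' := ih (fun g hg => hmem g (by simp [hg])) x y' (n + 1)
      have h2 : deltaCost S act (n + 1) (act l.prod x) y' ≤
          deltaCost S act n (act s (act l.prod x)) y' :=
        deltaCost_succ_le S (hmem s (by simp)) act hS1 hact1 n (act l.prod x) y'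
      have : l.length + (n + 1) = (s :: l).length + n := by simp; omega
      rw [this] at h1
      refine h1.trans (h2.trans ?_)
      rw [List.prod_cons, hactmul]

lemma wordLength_spec (S : Set G) (hSsymm : ∀ s ∈ S, s⁻¹ ∈ S)
    (hSgen : Subgroup.closure S = ⊤) (g : G) :
    ∃ f : Fin (wordLength S g) → G, (∀ i, f i ∈ S) ∧ (List.ofFn f).prod = g := by
  have hmem : g ∈ Submonoid.closure (S ∪ S⁻¹) := by
    rw [← Subgroup.closure_toSubmonoid]
    exact hSgen ▸ Subgroup.mem_top g
  obtain ⟨l, hl, hlp⟩ := Submonoid.exists_list_of_mem_closure hmem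
  have hne : {n : ℕ | ∃ f : Fin n → G, (∀ i, f i ∈ S ∨ (f i)⁻¹ ∈ S) ∧
      (List.ofFn f).prod = g}.Nonempty := by
    refine ⟨l.length, l.get, ?_, by rw [List.ofFn_get]; exact hlp⟩
    intro i
    rcases hl _ (l.get_mem i) with h | h
    · exact Or.inl h
    · exact Or.inr (Set.mem_inv.mp h)
  obtain ⟨f, hf, hfp⟩ := Nat.sInf_mem hne
  refine ⟨f, fun i => ?_, hfp⟩
  rcases hf i with h | h
  · exact h
  · simpa using hSsymm _ h

/-- Turn a warped chain into a delta chain. -/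
lemma chain_to_delta (S : Set G) (hSsymm : ∀ s ∈ S, s⁻¹ ∈ S) (hS1 : (1 : G) ∈ S)
    (hSgen : Subgroup.closure S = ⊤) (act : G → Y → Y)
    (hact1 : ∀ z, act 1 z = z) (hactmul : ∀ g h z, act (g * h) z = act g (act h z)) :
    ∀ (N : ℕ) (xs : Fin (N + 1) → Y) (γs : Fin N → G),
      ∃ n ≤ ∑ i, wordLength S (γs i),
        deltaCost S act n (xs 0) (xs (Fin.last N)) ≤
          ∑ i : Fin N, dist (act (γs i) (xs i.castSucc)) (xs i.succ) := by
  intro N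
  induction N with
  | zero =>
      intro xs γs
      refine ⟨0, le_refl _, ?_⟩
      have hmem : (∑ i : Fin 1, dist
          ((fun _ : Fin 1 => (xs 0, xs 0)) i).1 ((fun _ : Fin 1 => (xs 0, xs 0)) i).2) ∈
          dSet S act 0 (xs 0) (xs (Fin.last 0)) := ⟨fun _ => (xs 0, xs 0), rfl, rfl, fun i => i.elim0, rfl⟩
      have := csInf_le (dSet_bddBelow S act 0 (xs 0) (xs (Fin.last 0))) hmem
      simpa [deltaCost_eq] using this
  | succ N ih =>
      intro xs γs
      obtain ⟨n', hn', hd'⟩ := ih (fun i => xs i.succ) (fun i => γs i.succ)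
      set w := wordLength S (γs 0) with hw
      obtain ⟨f, hfS, hfp⟩ := wordLength_spec S hSsymm hSgen (γs 0)
      refine ⟨w + n', ?_, ?_⟩
      · rw [Fin.sum_univ_succ (f := fun i => wordLength S (γs i))]
        omega
      · have hC := deltaCost_list_le S hS1 act hact1 hactmul (List.ofFn f)
          (by intro g hg; obtain ⟨i, rfl⟩ := List.mem_ofFn.mp hg; exact hfS i)
          (xs 0) (xs (Fin.last (N + 1))) n'
        rw [List.length_ofFn, hfp] at hC
        have hA := deltaCost_le_dist_add S hS1 act hact1 n'
          (act (γs 0) (xs 0)) (xs 1) (xs (Fin.last (N + 1)))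
        have hlast : xs (Fin.last N).succ = xs (Fin.last (N + 1)) := by rw [Fin.succ_last]
        have hzero : xs (0 : Fin (N + 1)).succ = xs 1 := rfl
        rw [hlast, hzero] at hd'
        rw [Fin.sum_univ_succ
          (f := fun i => dist (act (γs i) (xs i.castSucc)) (xs i.succ))]
        have hsum : ∑ i : Fin N, dist (act (γs i.succ) (xs i.succ.castSucc)) (xs i.succ.succ)
            = ∑ i : Fin N, dist (act (γs i.succ) (xs i.castSucc.succ)) (xs i.succ.succ) := by
          refine Finset.sum_congr rfl fun i _ => ?_
          rw [Fin.succ_castSucc]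
        calc deltaCost S act (w + n') (xs 0) (xs (Fin.last (N + 1)))
            ≤ deltaCost S act n' (act (γs 0) (xs 0)) (xs (Fin.last (N + 1))) := hC
          _ ≤ dist (act (γs 0) (xs 0)) (xs 1) +
              deltaCost S act n' (xs 1) (xs (Fin.last (N + 1))) := hA
          _ ≤ dist (act (γs 0) (xs 0)) (xs 1) +
              ∑ i : Fin N, dist (act (γs i.succ) (xs i.castSucc.succ)) (xs i.succ.succ) := by
                refine add_le_add_right ?_ _
                refine hd'.trans_eq ?_
                rfl
          _ = dist (act (γs 0) (xs (0 : Fin (N+1)).castSucc)) (xs (0 : Fin (N+1)).succ) +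
              ∑ i : Fin N, dist (act (γs i.succ) (xs i.succ.castSucc)) (xs i.succ.succ) := by
                rw [hsum]; rfl

lemma chainSums_nonempty {X : Type*} (S : Set G) (act : G → X → X) (d : X → X → ℝ) (x x' : X) :
    (chainSums S act d x x').Nonempty :=
  ⟨_, 1, ![x, x'], ![1], rfl, rfl, rfl⟩

end Aux

section Pos

variable {Y : Type*} [MetricSpace Y] [ProperSpace Y] {G : Type*} [Group G]

lemma deltaCost_pos (S : Set G) (hSfin : S.Finite) (hS1 : (1 : G) ∈ S)
    (act : G → Y → Y) (hact1 : ∀ z, act 1 z = z)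
    (hactmul : ∀ g h z, act (g * h) z = act g (act h z))
    (hcont : ∀ g, Continuous (act g))
    (y y' : Y) (horb : ∀ γ : G, act γ y ≠ y') (n : ℕ) :
    0 < deltaCost S act n y y' := by
  classical
  set Z := Fin (n + 1) → Y × Y
  set cost : Z → ℝ := fun ys => ∑ i : Fin (n + 1), dist (ys i).1 (ys i).2 with hcost
  have hcostcont : Continuous cost := by
    refine continuous_finset_sum _ fun i _ => Continuous.dist ?_ ?_
    · exact continuous_fst.comp (continuous_apply i)
    · exact continuous_snd.comp (continuous_apply i)
  set C : Set Z := {ys | (ys 0).1 = y ∧ (ys (Fin.last n)).2 = y' ∧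
    (∀ i : Fin n, ∃ s ∈ S, (ys i.succ).1 = act s ((ys i.castSucc).2))} with hC
  have hCclosed : IsClosed C := by
    have h1 : IsClosed {ys : Z | (ys 0).1 = y} :=
      isClosed_eq (continuous_fst.comp (continuous_apply 0)) continuous_const
    have h2 : IsClosed {ys : Z | (ys (Fin.last n)).2 = y'} :=
      isClosed_eq (continuous_snd.comp (continuous_apply (Fin.last n))) continuous_const
    have h3 : IsClosed {ys : Z | ∀ i : Fin n, ∃ s ∈ S, (ys i.succ).1 = act s ((ys i.castSucc).2)} := by
      have : {ys : Z | ∀ i : Fin n, ∃ s ∈ S, (ys i.succ).1 = act s ((ys i.castSucc).2)}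
          = ⋂ i : Fin n, (fun ys : Z => ((ys i.succ).1, (ys i.castSucc).2)) ⁻¹'
            (⋃ s ∈ S, {p : Y × Y | p.1 = act s p.2}) := by
        ext ys
        simp only [Set.mem_setOf_eq, Set.mem_iInter, Set.mem_preimage, Set.mem_iUnion,
          Set.mem_setOf_eq, exists_prop]
      rw [this]
      refine isClosed_iInter fun i => IsClosed.preimage ?_ ?_
      · exact Continuous.prodMk (continuous_fst.comp (continuous_apply _))
          (continuous_snd.comp (continuous_apply _))
      · exact hSfin.isClosed_biUnion fun s _ =>
          isClosed_eq continuous_fst ((hcont s).comp continuous_snd)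
    have : C = {ys : Z | (ys 0).1 = y} ∩ ({ys : Z | (ys (Fin.last n)).2 = y'} ∩
        {ys : Z | ∀ i : Fin n, ∃ s ∈ S, (ys i.succ).1 = act s ((ys i.castSucc).2)}) := by
      ext ys; simp [hC, Set.mem_inter_iff, and_assoc]
    rw [this]
    exact h1.inter (h2.inter h3)
  set c₀ : ℝ := dist y y' + 1 with hc₀def
  have hc₀ : 0 < c₀ := by positivity
  -- compact sets
  set K : ℕ → Set Y := fun i =>
    Nat.rec ({y} : Set Y) (fun _ Ki => ⋃ s ∈ S, act s '' Metric.cthickening c₀ Ki) i with hKdef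
  set L : ℕ → Set Y := fun i => Metric.cthickening c₀ (K i) with hLdef
  have hK : ∀ i, IsCompact (K i) := by
    intro i
    induction i with
    | zero => exact isCompact_singleton
    | succ i ih =>
        exact hSfin.isCompact_biUnion fun s _ => (ih.cthickening).image (hcont s)
  have hL : ∀ i, IsCompact (L i) := fun i => (hK i).cthickening
  -- membership of bounded-cost chains
  have hdist_le : ∀ ys : Z, ∀ i : Fin (n + 1), dist (ys i).1 (ys i).2 ≤ cost ys := by
    intro ys i
    rw [hcost]
    exact Finset.single_le_sum (f := fun j : Fin (n + 1) => dist (ys j).1 (ys j).2)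
      (fun j _ => dist_nonneg) (Finset.mem_univ i)
  have hmemK : ∀ ys ∈ C, cost ys ≤ c₀ → ∀ m : ℕ, ∀ hm : m < n + 1,
      (ys ⟨m, hm⟩).1 ∈ K m ∧ (ys ⟨m, hm⟩).2 ∈ L m := by
    intro ys hys hcb m
    induction m with
    | zero =>
        intro hm
        have h1 : (ys ⟨0, hm⟩).1 ∈ K 0 := by
          simp [hKdef, hys.1]
        refine ⟨h1, ?_⟩
        exact Metric.mem_cthickening_of_dist_le _ _ _ _ h1
          (dist_comm (ys ⟨0, hm⟩).1 (ys ⟨0, hm⟩).2 ▸ ((hdist_le ys _).trans hcb))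
    | succ m ih =>
        intro hm
        have hm' : m < n + 1 := by omega
        have hmn : m < n := by omega
        obtain ⟨-, h2⟩ := ih hm'
        obtain ⟨s, hs, hrel⟩ := hys.2.2 ⟨m, hmn⟩
        have hsucc : (⟨m, hmn⟩ : Fin n).succ = ⟨m + 1, hm⟩ := rfl
        have hcs : (⟨m, hmn⟩ : Fin n).castSucc = ⟨m, hm'⟩ := rfl
        rw [hsucc, hcs] at hrel
        have h1 : (ys ⟨m + 1, hm⟩).1 ∈ K (m + 1) := by
          have : (ys ⟨m + 1, hm⟩).1 ∈ ⋃ s ∈ S, act s '' Metric.cthickening c₀ (K m) := by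
            refine Set.mem_biUnion hs ⟨(ys ⟨m, hm'⟩).2, h2, hrel.symm⟩
          exact this
        refine ⟨h1, ?_⟩
        exact Metric.mem_cthickening_of_dist_le _ _ _ _ h1
          (dist_comm (ys ⟨m + 1, hm⟩).1 (ys ⟨m + 1, hm⟩).2 ▸ ((hdist_le ys _).trans hcb))
  -- the compact sublevel set
  set T : Set Z := C ∩ cost ⁻¹' Set.Iic c₀ with hT
  have hTclosed : IsClosed T := hCclosed.inter (isClosed_Iic.preimage hcostcont)
  have hTsub : T ⊆ Set.univ.pi fun i : Fin (n + 1) => (K i.1) ×ˢ (L i.1) := by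
    rintro ys ⟨hysC, hysc⟩
    intro i _
    obtain ⟨h1, h2⟩ := hmemK ys hysC hysc i.1 i.2
    exact ⟨by simpa using h1, by simpa using h2⟩
  have hTcpt : IsCompact T :=
    IsCompact.of_isClosed_subset (isCompact_univ_pi fun i => (hK i.1).prod (hL i.1))
      hTclosed hTsub
  -- pointwise positivity on C
  have hpos : ∀ ys ∈ C, 0 < cost ys := by
    intro ys hys
    rcases lt_or_eq_of_le (Finset.sum_nonneg fun i (_ : i ∈ Finset.univ) =>
      (dist_nonneg : (0:ℝ) ≤ dist (ys i).1 (ys i).2)) with h | h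
    · exact h
    have hzero : ∀ i : Fin (n + 1), (ys i).1 = (ys i).2 := by
      intro i
      have := (Finset.sum_eq_zero_iff_of_nonneg
        (fun j (_ : j ∈ Finset.univ) => (dist_nonneg : (0:ℝ) ≤ dist (ys j).1 (ys j).2))).mp
        h.symm i (Finset.mem_univ i)
      exact dist_eq_zero.mp this
    have horbit : ∀ m : ℕ, ∀ hm : m < n + 1, ∃ γ : G, (ys ⟨m, hm⟩).2 = act γ y := by
      intro m
      induction m with
      | zero =>
          intro hm
          exact ⟨1, by rw [hact1, ← hys.1]; exact (hzero _).symm⟩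
      | succ m ih =>
          intro hm
          have hm' : m < n + 1 := by omega
          have hmn : m < n := by omega
          obtain ⟨γ, hγ⟩ := ih hm'
          obtain ⟨s, hs, hrel⟩ := hys.2.2 ⟨m, hmn⟩
          have hsucc : (⟨m, hmn⟩ : Fin n).succ = ⟨m + 1, hm⟩ := rfl
          have hcs : (⟨m, hmn⟩ : Fin n).castSucc = ⟨m, hm'⟩ := rfl
          rw [hsucc, hcs] at hrel
          refine ⟨s * γ, ?_⟩
          rw [← hzero ⟨m + 1, hm⟩, hrel, hγ, hactmul]
    obtain ⟨γ, hγ⟩ := horbit n (by omega)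
    have : (ys (Fin.last n)).2 = y' := hys.2.1
    exact absurd (hγ ▸ this : act γ y = y') (horb γ)
  -- nonemptiness of the delta set
  have Dne : {c | ∃ ys : Fin (n + 1) → Y × Y,
      (ys 0).1 = y ∧ (ys (Fin.last n)).2 = y' ∧
      (∀ i : Fin n, ∃ s ∈ S, (ys i.succ).1 = act s ((ys i.castSucc).2)) ∧
      c = ∑ i : Fin (n + 1), dist (ys i).1 (ys i).2}.Nonempty := by
    refine ⟨_, fun j => (y, if j = Fin.last n then y' else y), rfl, by simp, ?_, rfl⟩
    intro i
    exact ⟨1, hS1, by simp [hact1, (Fin.castSucc_lt_last i).ne]⟩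
  -- conclude
  by_cases hTne : T.Nonempty
  · obtain ⟨t₀, ht₀, hmin⟩ := hTcpt.exists_isMinOn hTne hcostcont.continuousOn
    refine lt_of_lt_of_le (lt_min (hpos t₀ ht₀.1) hc₀) (le_csInf Dne ?_)
    rintro c ⟨ys, h1, h2, h3, rfl⟩
    rcases le_or_gt (cost ys) c₀ with h | h
    · exact (min_le_left _ _).trans (isMinOn_iff.mp hmin ys ⟨⟨h1, h2, h3⟩, h⟩)
    · exact (min_le_right _ _).trans h.le
  · refine lt_of_lt_of_le hc₀ (le_csInf Dne ?_)
    rintro c ⟨ys, h1, h2, h3, rfl⟩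
    by_contra hlt
    push_neg at hlt
    exact hTne ⟨ys, ⟨h1, h2, h3⟩, hlt.le⟩

end Pos

open Filter


/-- if `y` and `y'` lie in different orbits, then the warped
distance `d_s(y,y')` tends to infinity as `s → ∞`. -/
theorem warped_metric_tendsto_atTop_of_different_orbits {Y : Type*} [MetricSpace Y]
    [ProperSpace Y]
    {G : Type*} [Group G] (S : Set G) (hSfin : S.Finite) (hSsymm : ∀ s ∈ S, s⁻¹ ∈ S)
    (hS1 : (1 : G) ∈ S) (hSgen : Subgroup.closure S = ⊤)
    (act : G → Y → Y)
    (hact1 : ∀ y, act 1 y = y) (hactmul : ∀ g h y, act (g * h) y = act g (act h y))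
    (hcont : ∀ g, Continuous (act g))
    (y y' : Y) (horb : ∀ γ : G, act γ y ≠ y') :
    Tendsto (fun s : ℝ => warpDist S act (fun a b => s * dist a b) y y') atTop atTop := by
  have hposd : ∀ n : ℕ, 0 < deltaCost S act n y y' :=
    deltaCost_pos S hSfin hS1 act hact1 hactmul hcont y y' horb
  rw [tendsto_atTop]
  intro b
  set M : ℕ := ⌈b⌉₊ with hM
  have hbM : b ≤ (M : ℝ) := Nat.le_ceil b
  have hrange : (Finset.range (M + 1)).Nonempty := Finset.nonempty_range_add_one
  set ε : ℝ := (Finset.range (M + 1)).inf' hrange (fun n => deltaCost S act n y y') with hε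
  have hεpos : 0 < ε := (Finset.lt_inf'_iff hrange).mpr fun n _ => hposd n
  have hεle : ∀ n, n ≤ M → ε ≤ deltaCost S act n y y' := fun n hn =>
    Finset.inf'_le _ (Finset.mem_range.mpr (by omega))
  filter_upwards [eventually_ge_atTop (max 0 ((M : ℝ) / ε))] with s hs
  have hs0 : (0:ℝ) ≤ s := le_trans (le_max_left _ _) hs
  have hsM : (M : ℝ) / ε ≤ s := le_trans (le_max_right _ _) hs
  refine hbM.trans ?_
  show (M : ℝ) ≤ sInf (chainSums S act (fun a b => s * dist a b) y y')
  refine le_csInf (chainSums_nonempty S act _ y y') ?_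
  rintro c ⟨N, xs, γs, h0, hlast, rfl⟩
  set D : ℝ := ∑ i : Fin N, dist (act (γs i) (xs i.castSucc)) (xs i.succ) with hD
  have hD0 : 0 ≤ D := Finset.sum_nonneg fun i _ => dist_nonneg
  set Wn : ℕ := ∑ i, wordLength S (γs i) with hW
  have hsplit : ∑ i : Fin N, ((wordLength S (γs i) : ℝ) +
      s * dist (act (γs i) (xs i.castSucc)) (xs i.succ)) = (Wn : ℝ) + s * D := by
    rw [Finset.sum_add_distrib, ← Finset.mul_sum, hW, hD]; push_cast; ring
  rw [hsplit]
  rcases le_or_gt Wn M with hWM | hWM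
  · obtain ⟨n, hn, hdelta⟩ := chain_to_delta S hSsymm hS1 hSgen act hact1 hactmul N xs γs
    rw [h0, hlast] at hdelta
    have hεD : ε ≤ D := (hεle n (le_trans hn hWM)).trans hdelta
    have h1 : (M : ℝ) ≤ s * ε := (div_le_iff₀ hεpos).mp hsM
    calc (M:ℝ) ≤ s * ε := h1
      _ ≤ s * D := mul_le_mul_of_nonneg_left hεD hs0
      _ ≤ (Wn : ℝ) + s * D := le_add_of_nonneg_left (by positivity)
  · have h2 : (M:ℝ) ≤ (Wn : ℝ) := by exact_mod_cast hWM.le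
    calc (M:ℝ) ≤ (Wn:ℝ) := h2
      _ ≤ (Wn : ℝ) + s * D := le_add_of_nonneg_right (mul_nonneg hs0 hD0)
end
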